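/- Let G be a finite simple graph, let v be a vertex of G with degree d(v), set λ = λ(G) and μ = λ(G − v), and suppose λ > μ. Then λ·(λ² − μ²) ≤ λ·d(v) + 2·e(G[N(v)]), where e(G[N(v)]) is the number of edges of the subgraph of G induced by the neighborhood of v. -/

import Mathlib

open Matrix

/-- The adjacency matrix of a simple graph, viewed over `ℝ`, is Hermitian. -/
lemma adjHerm {V : Type*} [Fintype V] (G : SimpleGraph V) [DecidableRel G.Adj] :
    (G.adjMatrix ℝ).IsHermitian := by
  rw [Matrix.IsHermitian, Matrix.conjTranspose_eq_transpose_of_trivial]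
  exact G.isSymm_adjMatrix

/-- The spectral radius of a finite simple graph: the maximum of the absolute
values of the eigenvalues of its adjacency matrix. -/
noncomputable def specRad {V : Type*} [Fintype V] [DecidableEq V]
    (G : SimpleGraph V) [DecidableRel G.Adj] : ℝ :=
  ⨆ i, |(adjHerm G).eigenvalues i|

instance {V : Type*} (G : SimpleGraph V) [DecidableRel G.Adj] (s : Set V)
    [DecidablePred (· ∈ s)] : DecidableRel (G.induce s).Adj :=
  fun a b => ‹DecidableRel G.Adj› a b

/-- The graph `G - v` obtained from `G` by deleting the vertex `v`
and all edges incident to it. -/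
abbrev deleteVertex {V : Type*} [DecidableEq V] (G : SimpleGraph V) (v : V) :
    SimpleGraph {u // u ≠ v} :=
  G.induce {u | u ≠ v}

/-- With `λ = λ(G)`, `μ = λ(G - v)` and `λ > μ`, one has
`λ(λ² - μ²) ≤ λ d(v) + 2 e(G[N(v)])`. -/
lemma spectral_sums {n : Type*} [Fintype n] [DecidableEq n] {A : Matrix n n ℝ}
    (hA : A.IsHermitian) (y : n → ℝ) :
    ∃ c : n → ℝ,
      y ⬝ᵥ y = ∑ j, c j ^ 2 ∧
      y ⬝ᵥ (A *ᵥ y) = ∑ j, hA.eigenvalues j * c j ^ 2 ∧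
      (A *ᵥ y) ⬝ᵥ (A *ᵥ y) = ∑ j, hA.eigenvalues j ^ 2 * c j ^ 2 ∧
      (A *ᵥ y) ⬝ᵥ (A *ᵥ (A *ᵥ y)) = ∑ j, hA.eigenvalues j ^ 3 * c j ^ 2 := by
  set U : Matrix n n ℝ := (hA.eigenvectorUnitary : Matrix n n ℝ) with hUdef
  have hU2 : U * star U = 1 := Matrix.mem_unitaryGroup_iff.mp hA.eigenvectorUnitary.2
  have hdot : ∀ p q : n → ℝ, p ⬝ᵥ q = (star U *ᵥ p) ⬝ᵥ (star U *ᵥ q) := by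
    intro p q
    have : (star U *ᵥ p) ⬝ᵥ (star U *ᵥ q) = p ⬝ᵥ ((U * star U) *ᵥ q) := by
      rw [← Matrix.mulVec_mulVec, Matrix.dotProduct_mulVec p U,
        Matrix.star_eq_conjTranspose, Matrix.conjTranspose_eq_transpose_of_trivial,
        Matrix.mulVec_transpose]
    rw [this, hU2, Matrix.one_mulVec]
  have hDA : ∀ q : n → ℝ, star U *ᵥ (A *ᵥ q) =
      fun j => hA.eigenvalues j * (star U *ᵥ q) j := by
    intro q
    have h1 : star U * A = Matrix.diagonal hA.eigenvalues * star U := by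
      conv_lhs => rw [hA.spectral_theorem]
      have hofreal : (RCLike.ofReal ∘ hA.eigenvalues : n → ℝ) = hA.eigenvalues := by
        funext i; simp
      rw [hofreal, Unitary.conjStarAlgAut_apply, ← Matrix.mul_assoc, ← Matrix.mul_assoc,
        Matrix.mem_unitaryGroup_iff'.mp hA.eigenvectorUnitary.2, Matrix.one_mul]
    rw [Matrix.mulVec_mulVec, h1, ← Matrix.mulVec_mulVec]
    funext j
    exact Matrix.mulVec_diagonal _ _ _
  refine ⟨star U *ᵥ y, ?_, ?_, ?_, ?_⟩
  · rw [hdot y y]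
    exact Finset.sum_congr rfl fun j _ => by ring
  · rw [hdot y (A *ᵥ y), hDA y]
    exact Finset.sum_congr rfl fun j _ => by simp [dotProduct]; ring
  · rw [hdot (A *ᵥ y) (A *ᵥ y), hDA y]
    exact Finset.sum_congr rfl fun j _ => by simp [dotProduct]; ring
  · rw [hdot (A *ᵥ y) (A *ᵥ (A *ᵥ y)), hDA y, hDA (A *ᵥ y), hDA y]
    exact Finset.sum_congr rfl fun j _ => by simp [dotProduct]; ring

lemma abs_eig_le_specRad {V : Type*} [Fintype V] [DecidableEq V]
    (G : SimpleGraph V) [DecidableRel G.Adj] (i : V) :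
    |(adjHerm G).eigenvalues i| ≤ specRad G := by
  unfold specRad
  exact le_ciSup (f := fun j => |(adjHerm G).eigenvalues j|) (Set.Finite.bddAbove (Set.finite_range _)) i

lemma specRad_nonneg {V : Type*} [Fintype V] [DecidableEq V]
    (G : SimpleGraph V) [DecidableRel G.Adj] : 0 ≤ specRad G := by
  unfold specRad
  exact Real.iSup_nonneg fun i => abs_nonneg _

lemma exists_perron {V : Type*} [Fintype V] [DecidableEq V] [Nonempty V]
    (G : SimpleGraph V) [DecidableRel G.Adj] :
    ∃ x : V → ℝ, (∀ i, 0 ≤ x i) ∧ x ⬝ᵥ x = 1 ∧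
      (G.adjMatrix ℝ) *ᵥ x = specRad G • x := by
  classical
  set A := G.adjMatrix ℝ with hAdef
  set hA := adjHerm G with hhA
  obtain ⟨i0, hi0⟩ := Finite.exists_max (fun i => |hA.eigenvalues i|)
  have hsup : specRad G = |hA.eigenvalues i0| :=
    le_antisymm (ciSup_le hi0) (abs_eig_le_specRad G i0)
  set lam := specRad G with hlam
  set u : V → ℝ := ⇑(hA.eigenvectorBasis i0) with hu
  have hAu : A *ᵥ u = hA.eigenvalues i0 • u := hA.mulVec_eigenvectorBasis i0
  have hnormu : ∑ i, u i ^ 2 = 1 := by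
    have h1 : ‖hA.eigenvectorBasis i0‖ = 1 := hA.eigenvectorBasis.orthonormal.1 i0
    have h2 : ‖hA.eigenvectorBasis i0‖ ^ 2 = 1 := by rw [h1]; norm_num
    rw [EuclideanSpace.norm_eq] at h2
    rw [Real.sq_sqrt (by positivity)] at h2
    simpa [Real.norm_eq_abs, sq_abs] using h2
  refine ⟨fun i => |u i|, fun i => abs_nonneg _, ?_, ?_⟩
  · simp only [dotProduct, ← sq]
    simpa [sq_abs] using hnormu
  · -- Rayleigh: lam ≤ xᵀAx
    set x : V → ℝ := fun i => |u i| with hx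
    have hx2 : x ⬝ᵥ x = 1 := by
      simp only [dotProduct, hx, ← sq]
      simpa [sq_abs] using hnormu
    have hptwise : ∀ i, lam * x i ^ 2 ≤ x i * (A *ᵥ x) i := by
      intro i
      have h1 : |(A *ᵥ u) i| ≤ (A *ᵥ x) i := by
        simp only [Matrix.mulVec, dotProduct]
        refine (Finset.abs_sum_le_sum_abs _ _).trans ?_
        refine Finset.sum_le_sum fun j _ => ?_
        rw [abs_mul]
        have : |A i j| = A i j := abs_of_nonneg (by simp [hAdef]; split <;> norm_num)
        rw [this]
      have h2 : |(A *ᵥ u) i| = lam * x i := by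
        rw [hAu]; simp [hsup, abs_mul, hx, Pi.smul_apply, smul_eq_mul]
      calc lam * x i ^ 2 = (lam * x i) * x i := by ring
        _ = |(A *ᵥ u) i| * x i := by rw [h2]
        _ ≤ (A *ᵥ x) i * x i := by
            apply mul_le_mul_of_nonneg_right (h2 ▸ h1) (abs_nonneg _)
        _ = x i * (A *ᵥ x) i := by ring
    have hray : lam ≤ x ⬝ᵥ (A *ᵥ x) := by
      have := Finset.sum_le_sum (fun i (_ : i ∈ Finset.univ) => hptwise i)
      calc lam = lam * (x ⬝ᵥ x) := by rw [hx2, mul_one]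
        _ = ∑ i, lam * x i ^ 2 := by
            simp only [dotProduct, Finset.mul_sum]; exact Finset.sum_congr rfl fun i _ => by ring
        _ ≤ ∑ i, x i * (A *ᵥ x) i := this
        _ = x ⬝ᵥ (A *ᵥ x) := rfl
    obtain ⟨c, hc0, hc1, hc2, hc3⟩ := spectral_sums hA x
    have heigle : ∀ j, hA.eigenvalues j ≤ lam := fun j =>
      (le_abs_self _).trans (abs_eig_le_specRad G j)
    have hzero : ∀ j ∈ Finset.univ, (lam - hA.eigenvalues j) * c j ^ 2 = 0 := by
      have hsumle : ∑ j, (lam - hA.eigenvalues j) * c j ^ 2 ≤ 0 := by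
        have : ∑ j, (lam - hA.eigenvalues j) * c j ^ 2
            = lam * (x ⬝ᵥ x) - x ⬝ᵥ (A *ᵥ x) := by
          rw [hc0, hc1, Finset.mul_sum, ← Finset.sum_sub_distrib]
          exact Finset.sum_congr rfl fun j _ => by ring
        rw [this, hx2, mul_one]
        linarith [hray]
      have hnn : ∀ j ∈ Finset.univ, 0 ≤ (lam - hA.eigenvalues j) * c j ^ 2 :=
        fun j _ => mul_nonneg (by linarith [heigle j]) (sq_nonneg _)
      intro j hj
      have := (Finset.sum_eq_zero_iff_of_nonneg hnn).mp
        (le_antisymm hsumle (Finset.sum_nonneg hnn))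
      exact this j hj
    -- now show A *ᵥ x = lam • x  via ‖Ax - lam x‖² = 0
    have hnormzero : (A *ᵥ x - lam • x) ⬝ᵥ (A *ᵥ x - lam • x) = 0 := by
      have hexp : (A *ᵥ x - lam • x) ⬝ᵥ (A *ᵥ x - lam • x)
          = (A *ᵥ x) ⬝ᵥ (A *ᵥ x) - 2 * lam * (x ⬝ᵥ (A *ᵥ x)) + lam ^ 2 * (x ⬝ᵥ x) := by
        simp only [dotProduct, Pi.sub_apply, Pi.smul_apply, smul_eq_mul, Finset.mul_sum,
          ← Finset.sum_add_distrib, ← Finset.sum_sub_distrib]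
        exact Finset.sum_congr rfl fun i _ => by ring
      rw [hexp, hc0, hc1, hc2]
      have : ∑ j, hA.eigenvalues j ^ 2 * c j ^ 2
            - 2 * lam * ∑ j, hA.eigenvalues j * c j ^ 2 + lam ^ 2 * ∑ j, c j ^ 2
          = ∑ j, (lam - hA.eigenvalues j) * ((lam - hA.eigenvalues j) * c j ^ 2) := by
        rw [Finset.mul_sum, Finset.mul_sum, ← Finset.sum_sub_distrib, ← Finset.sum_add_distrib]
        exact Finset.sum_congr rfl fun j _ => by ring
      rw [this]
      exact Finset.sum_eq_zero fun j hj => by rw [hzero j hj, mul_zero]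
    have : ∀ i, (A *ᵥ x - lam • x) i = 0 := by
      intro i
      have hsq : ∑ i, ((A *ᵥ x - lam • x) i) ^ 2 = 0 := by
        simpa [dotProduct, sq] using hnormzero
      have := (Finset.sum_eq_zero_iff_of_nonneg
        (fun i (_ : i ∈ Finset.univ) => sq_nonneg ((A *ᵥ x - lam • x) i))).mp hsq i (Finset.mem_univ i)
      exact pow_eq_zero_iff (n := 2) (by norm_num) |>.mp this
    funext i
    have := this i
    simp only [Pi.sub_apply, Pi.smul_apply, smul_eq_mul, sub_eq_zero] at this
    simpa using this

theorem lambda_mul_gap_le {V : Type*} [Fintype V] [DecidableEq V]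
    (G : SimpleGraph V) [DecidableRel G.Adj] (v : V)
    (hlt : specRad (deleteVertex G v) < specRad G) :
    specRad G * (specRad G ^ 2 - specRad (deleteVertex G v) ^ 2) ≤
      specRad G * (G.degree v : ℝ) +
        2 * ((G.induce (G.neighborSet v)).edgeFinset.card : ℝ) := by
  classical
  have : Nonempty V := ⟨v⟩
  set A := G.adjMatrix ℝ with hAdef
  set lam := specRad G with hlamdef
  set mu := specRad (deleteVertex G v) with hmudef
  set d : ℝ := (G.degree v : ℝ) with hddef
  set eN : ℝ := ((G.induce (G.neighborSet v)).edgeFinset.card : ℝ) with heNdef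
  have hmu0 : 0 ≤ mu := specRad_nonneg _
  have hlam0 : (0:ℝ) < lam := lt_of_le_of_lt hmu0 hlt
  have hsym : ∀ u w : V, A u w = A w u := by
    intro u w
    by_cases h : G.Adj u w
    · simp [hAdef, h, h.symm]
    · have h' : ¬ G.Adj w u := fun hh => h hh.symm
      simp [hAdef, h, h']
  have hAvv : A v v = 0 := by simp [hAdef]
  obtain ⟨x, hxnn, hx1, hAx⟩ := exists_perron G
  have hAx' : ∀ i, ∑ w, A i w * x w = lam * x i := by
    intro i
    have h := congrFun hAx i
    simp only [Pi.smul_apply, smul_eq_mul] at h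
    exact h
  set t : ℝ := x v ^ 2 with htdef
  have hind : ∀ f : V → ℝ, ∑ u, A v u * f u = ∑ u ∈ G.neighborFinset v, f u := by
    intro f
    exact G.adjMatrix_dotProduct v f
  have hdeg : ∑ u, A v u = d := by
    have h1 : ∑ u, A v u * (fun _ => (1:ℝ)) u = ∑ u ∈ G.neighborFinset v, (1:ℝ) := hind _
    simp only [mul_one] at h1
    rw [h1, Finset.sum_const, nsmul_eq_mul, mul_one, hddef,
      ← SimpleGraph.card_neighborFinset_eq_degree]
  have hW2v : ∑ w, A v w * A w v = d := by
    have h0 : ∀ w, A v w * A w v = A v w := by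
      intro w
      rw [hsym w v]
      simp only [hAdef, SimpleGraph.adjMatrix_apply]
      split <;> norm_num
    rw [Finset.sum_congr rfl fun w _ => h0 w]
    exact hdeg
  -- 2e identity
  have he2 : ∑ u, ∑ w, A v u * (A u w * A w v) = 2 * eN := by
    have step1 : ∑ u, ∑ w, A v u * (A u w * A w v)
        = ∑ u ∈ G.neighborFinset v, ∑ w ∈ G.neighborFinset v, A u w := by
      calc ∑ u, ∑ w, A v u * (A u w * A w v)
          = ∑ u, A v u * (∑ w, A u w * A w v) := by
            refine Finset.sum_congr rfl fun u _ => ?_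
            rw [Finset.mul_sum]
        _ = ∑ u ∈ G.neighborFinset v, ∑ w, A u w * A w v := hind _
        _ = ∑ u ∈ G.neighborFinset v, ∑ w ∈ G.neighborFinset v, A u w := by
            refine Finset.sum_congr rfl fun u _ => ?_
            calc ∑ w, A u w * A w v = ∑ w, A v w * A u w := by
                  refine Finset.sum_congr rfl fun w _ => ?_
                  rw [hsym w v]; ring
              _ = ∑ w ∈ G.neighborFinset v, A u w := hind _
    have hconv : ∀ g : V → ℝ, ∑ u : (G.neighborSet v), g ↑u
        = ∑ u ∈ G.neighborFinset v, g u := by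
      intro g
      exact (Finset.sum_subtype _ (fun u => by
        simp [SimpleGraph.mem_neighborFinset, SimpleGraph.mem_neighborSet]) g).symm
    have hdegu : ∀ u : (G.neighborSet v), ((G.induce (G.neighborSet v)).degree u : ℝ)
        = ∑ w : (G.neighborSet v), A ↑u ↑w := by
      intro u
      rw [← SimpleGraph.card_neighborFinset_eq_degree, SimpleGraph.neighborFinset_eq_filter]
      rw [← Finset.sum_boole]
      refine Finset.sum_congr rfl fun w _ => ?_
      simp [hAdef]
    have hnat : ∑ u : (G.neighborSet v), (G.induce (G.neighborSet v)).degree u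
        = 2 * (G.induce (G.neighborSet v)).edgeFinset.card :=
      SimpleGraph.sum_degrees_eq_twice_card_edges _
    have hcast : 2 * eN = ∑ u : (G.neighborSet v), ((G.induce (G.neighborSet v)).degree u : ℝ) := by
      have h := congrArg (Nat.cast : ℕ → ℝ) hnat
      push_cast at h
      rw [heNdef]
      linarith [h]
    rw [step1, hcast, Finset.sum_congr rfl fun u _ => hdegu u,
      hconv (fun u => ∑ w : (G.neighborSet v), A u ↑w)]
    exact Finset.sum_congr rfl fun u _ => (hconv (fun w => A u w)).symm
  -- subtype sum transfer
  have hsub : ∀ f : V → ℝ, ∑ u : {u // u ≠ v}, f ↑u = ∑ u ∈ Finset.univ.erase v, f u := by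
    intro f
    exact (Finset.sum_subtype _ (fun u => by simp) f).symm
  have herase : ∀ f : V → ℝ, ∑ u ∈ Finset.univ.erase v, f u = (∑ u, f u) - f v := by
    intro f
    exact Finset.sum_erase_eq_sub (Finset.mem_univ v)
  set B := (deleteVertex G v).adjMatrix ℝ with hBdef
  have hBA : ∀ u w : {u // u ≠ v}, B u w = A ↑u ↑w := by
    intro u w
    simp [hBdef, hAdef]
  set y : {u // u ≠ v} → ℝ := fun u => x ↑u with hydef
  have hBy : ∀ u : {u // u ≠ v}, (B *ᵥ y) u = lam * x ↑u - A ↑u v * x v := by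
    intro u
    show ∑ w : {u // u ≠ v}, B u w * y w = _
    calc ∑ w : {u // u ≠ v}, B u w * y w
        = ∑ w : {u // u ≠ v}, A ↑u ↑w * x ↑w := by
          refine Finset.sum_congr rfl fun w _ => ?_
          rw [hBA]
      _ = ∑ w ∈ Finset.univ.erase v, A ↑u w * x w := hsub (fun w => A ↑u w * x w)
      _ = (∑ w, A ↑u w * x w) - A ↑u v * x v := herase _
      _ = lam * x ↑u - A ↑u v * x v := by rw [hAx']
  -- W2
  set W2 : V → ℝ := fun u => ∑ w, A u w * A w v with hW2def
  have hBBy : ∀ u : {u // u ≠ v},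
      (B *ᵥ (B *ᵥ y)) u = lam * (lam * x ↑u - A ↑u v * x v) - x v * W2 ↑u := by
    intro u
    show ∑ w : {u // u ≠ v}, B u w * (B *ᵥ y) w = _
    calc ∑ w : {u // u ≠ v}, B u w * (B *ᵥ y) w
        = ∑ w : {u // u ≠ v}, A ↑u ↑w * (lam * x ↑w - A ↑w v * x v) := by
          refine Finset.sum_congr rfl fun w _ => ?_
          rw [hBA, hBy]
      _ = ∑ w ∈ Finset.univ.erase v, A ↑u w * (lam * x w - A w v * x v) :=
          hsub (fun w => A ↑u w * (lam * x w - A w v * x v))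
      _ = (∑ w, A ↑u w * (lam * x w - A w v * x v)) - A ↑u v * (lam * x v - A v v * x v) :=
          herase _
      _ = lam * (∑ w, A ↑u w * x w) - x v * (∑ w, A ↑u w * A w v)
            - A ↑u v * (lam * x v) := by
          rw [hAvv]
          have hstep : (∑ w, A ↑u w * (lam * x w - A w v * x v))
              = ∑ w, (lam * (A ↑u w * x w) - x v * (A ↑u w * A w v)) :=
            Finset.sum_congr rfl fun w _ => by ring
          rw [hstep, Finset.sum_sub_distrib, Finset.mul_sum, Finset.mul_sum]
          ring
      _ = lam * (lam * x ↑u - A ↑u v * x v) - x v * W2 ↑u := by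
          rw [hAx', hW2def]
          ring
  -- scalar sums over erase
  have hS0 : ∑ u ∈ Finset.univ.erase v, x u * x u = 1 - t := by
    rw [herase (fun u => x u * x u)]
    have : ∑ u, x u * x u = 1 := hx1
    rw [this, htdef]; ring
  have hxAv : ∑ u, A u v * x u = lam * x v := by
    calc ∑ u, A u v * x u = ∑ u, A v u * x u := by
          refine Finset.sum_congr rfl fun u _ => ?_
          rw [hsym u v]
      _ = lam * x v := hAx' v
  have hSA : ∑ u ∈ Finset.univ.erase v, A u v * x u = lam * x v := by
    rw [herase (fun u => A u v * x u), hxAv, hAvv]; ring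
  -- Y quantities
  set Y0 := y ⬝ᵥ y with hY0def
  set Y1 := y ⬝ᵥ (B *ᵥ y) with hY1def
  set Y2 := (B *ᵥ y) ⬝ᵥ (B *ᵥ y) with hY2def
  set Y3 := (B *ᵥ y) ⬝ᵥ (B *ᵥ (B *ᵥ y)) with hY3def
  have hY0 : Y0 = 1 - t := by
    rw [hY0def]
    show ∑ u : {u // u ≠ v}, y u * y u = 1 - t
    rw [hydef]
    calc ∑ u : {u // u ≠ v}, x ↑u * x ↑u
        = ∑ u ∈ Finset.univ.erase v, x u * x u := hsub (fun u => x u * x u)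
      _ = 1 - t := hS0
  have hY1 : Y1 = lam * (1 - t) - lam * t := by
    rw [hY1def]
    show ∑ u : {u // u ≠ v}, y u * (B *ᵥ y) u = _
    calc ∑ u : {u // u ≠ v}, y u * (B *ᵥ y) u
        = ∑ u : {u // u ≠ v}, x ↑u * (lam * x ↑u - A ↑u v * x v) := by
          refine Finset.sum_congr rfl fun u _ => ?_
          rw [hBy, hydef]
      _ = ∑ u ∈ Finset.univ.erase v, x u * (lam * x u - A u v * x v) :=
          hsub (fun u => x u * (lam * x u - A u v * x v))
      _ = lam * (∑ u ∈ Finset.univ.erase v, x u * x u)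
            - x v * (∑ u ∈ Finset.univ.erase v, A u v * x u) := by
          rw [Finset.mul_sum, Finset.mul_sum, ← Finset.sum_sub_distrib]
          refine Finset.sum_congr rfl fun u _ => by ring
      _ = lam * (1 - t) - lam * t := by
          rw [hS0, hSA, htdef]; ring
  -- hT1 : ∑ x u * W2 u over erase
  have hxW2 : ∑ u, x u * W2 u = lam * (lam * x v) := by
    calc ∑ u, x u * W2 u = ∑ u, ∑ w, x u * (A u w * A w v) := by
          refine Finset.sum_congr rfl fun u _ => ?_
          rw [hW2def, Finset.mul_sum]
      _ = ∑ w, ∑ u, x u * (A u w * A w v) := Finset.sum_comm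
      _ = ∑ w, (lam * x w) * A w v := by
          refine Finset.sum_congr rfl fun w _ => ?_
          calc ∑ u, x u * (A u w * A w v) = (∑ u, A w u * x u) * A w v := by
                rw [Finset.sum_mul]
                refine Finset.sum_congr rfl fun u _ => ?_
                rw [hsym u w]; ring
            _ = (lam * x w) * A w v := by rw [hAx']
      _ = lam * ∑ w, A w v * x w := by
          rw [Finset.mul_sum]
          refine Finset.sum_congr rfl fun w _ => by ring
      _ = lam * (lam * x v) := by rw [hxAv]
  have hW2vv : W2 v = d := hW2v
  have hT1 : ∑ u ∈ Finset.univ.erase v, x u * W2 u = lam * (lam * x v) - x v * d := by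
    rw [herase (fun u => x u * W2 u), hxW2, hW2vv]
  have hAW2 : ∑ u, A u v * W2 u = 2 * eN := by
    calc ∑ u, A u v * W2 u = ∑ u, ∑ w, A v u * (A u w * A w v) := by
          refine Finset.sum_congr rfl fun u _ => ?_
          rw [hW2def, Finset.mul_sum, hsym u v]
      _ = 2 * eN := he2
  have hT2 : ∑ u ∈ Finset.univ.erase v, A u v * W2 u = 2 * eN := by
    rw [herase (fun u => A u v * W2 u), hAW2, hAvv]; ring
  have hY2' : (∑ u ∈ Finset.univ.erase v,
      (lam * x u - A u v * x v) * (lam * x u - A u v * x v)) = Y2 := by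
    rw [hY2def]
    calc ∑ u ∈ Finset.univ.erase v, (lam * x u - A u v * x v) * (lam * x u - A u v * x v)
        = ∑ u : {u // u ≠ v}, (lam * x ↑u - A ↑u v * x v) * (lam * x ↑u - A ↑u v * x v) :=
          (hsub (fun u => (lam * x u - A u v * x v) * (lam * x u - A u v * x v))).symm
      _ = ∑ u : {u // u ≠ v}, (B *ᵥ y) u * (B *ᵥ y) u := by
          refine Finset.sum_congr rfl fun u _ => ?_
          rw [hBy]
      _ = (B *ᵥ y) ⬝ᵥ (B *ᵥ y) := rfl
  have hY3 : Y3 = lam * Y2 - x v * (lam * (lam * (lam * x v) - x v * d) - x v * (2 * eN)) := by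
    rw [hY3def]
    show ∑ u : {u // u ≠ v}, (B *ᵥ y) u * (B *ᵥ (B *ᵥ y)) u = _
    calc ∑ u : {u // u ≠ v}, (B *ᵥ y) u * (B *ᵥ (B *ᵥ y)) u
        = ∑ u : {u // u ≠ v}, (lam * x ↑u - A ↑u v * x v) *
            (lam * (lam * x ↑u - A ↑u v * x v) - x v * W2 ↑u) := by
          refine Finset.sum_congr rfl fun u _ => ?_
          rw [hBy, hBBy]
      _ = ∑ u ∈ Finset.univ.erase v, (lam * x u - A u v * x v) *
            (lam * (lam * x u - A u v * x v) - x v * W2 u) :=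
          hsub (fun u => (lam * x u - A u v * x v) * (lam * (lam * x u - A u v * x v) - x v * W2 u))
      _ = lam * (∑ u ∈ Finset.univ.erase v, (lam * x u - A u v * x v) * (lam * x u - A u v * x v))
          - x v * (lam * (∑ u ∈ Finset.univ.erase v, x u * W2 u)
              - x v * (∑ u ∈ Finset.univ.erase v, A u v * W2 u)) := by
          rw [Finset.mul_sum, Finset.mul_sum, Finset.mul_sum, ← Finset.sum_sub_distrib,
            Finset.mul_sum, ← Finset.sum_sub_distrib]
          refine Finset.sum_congr rfl fun u _ => by ring
      _ = lam * Y2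
          - x v * (lam * (lam * (lam * x v) - x v * d) - x v * (2 * eN)) := by
          rw [hT1, hT2, hY2']
  -- spectral sums for B
  obtain ⟨c, hc0, hc1, hc2, hc3⟩ := spectral_sums (adjHerm (deleteVertex G v)) y
  have hc1' : y ⬝ᵥ (B *ᵥ y)
      = ∑ j, (adjHerm (deleteVertex G v)).eigenvalues j * c j ^ 2 := hc1
  have hc2' : (B *ᵥ y) ⬝ᵥ (B *ᵥ y)
      = ∑ j, (adjHerm (deleteVertex G v)).eigenvalues j ^ 2 * c j ^ 2 := hc2
  have hc3' : (B *ᵥ y) ⬝ᵥ (B *ᵥ (B *ᵥ y))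
      = ∑ j, (adjHerm (deleteVertex G v)).eigenvalues j ^ 3 * c j ^ 2 := hc3
  clear hc1 hc2 hc3
  set θ := (adjHerm (deleteVertex G v)).eigenvalues with hθdef
  have hθle : ∀ j, |θ j| ≤ mu := fun j => abs_eig_le_specRad (deleteVertex G v) j
  -- t > 0
  have ht : 0 < t := by
    rcases lt_or_eq_of_le (sq_nonneg (x v)) with h | h
    · exact h
    · exfalso
      have hxv : x v = 0 := by
        have := h.symm
        exact pow_eq_zero_iff (n := 2) (by norm_num) |>.mp this
      have ht0 : t = 0 := by rw [htdef, hxv]; ring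
      have hY1' : Y1 = lam := by rw [hY1, ht0]; ring
      have hY0' : Y0 = 1 := by rw [hY0, ht0]; ring
      have hle : Y1 ≤ mu * Y0 := by
        rw [hY1def, hc1', hY0def, hc0, Finset.mul_sum]
        refine Finset.sum_le_sum fun j _ => ?_
        have h1 : θ j ≤ mu := (le_abs_self _).trans (hθle j)
        exact mul_le_mul_of_nonneg_right h1 (sq_nonneg _)
      rw [hY1', hY0', mul_one] at hle
      exact absurd hlt (not_lt.mpr hle)
  -- main spectral inequality
  have hF2 : 0 ≤ ∑ j, (lam - θ j) * ((mu ^ 2 - θ j ^ 2) * c j ^ 2) := by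
    refine Finset.sum_nonneg fun j _ => ?_
    have h1 : θ j ≤ mu := (le_abs_self _).trans (hθle j)
    have h2 : θ j ^ 2 ≤ mu ^ 2 := by
      rw [← sq_abs]
      exact pow_le_pow_left₀ (abs_nonneg _) (hθle j) 2
    have h3 : 0 ≤ lam - θ j := by linarith
    exact mul_nonneg h3 (mul_nonneg (by linarith) (sq_nonneg _))
  have hexpand : ∑ j, (lam - θ j) * ((mu ^ 2 - θ j ^ 2) * c j ^ 2)
      = lam * mu ^ 2 * Y0 - mu ^ 2 * Y1 - lam * Y2 + Y3 := by
    rw [hY0def, hY1def, hY2def, hY3def, hc0, hc1', hc2', hc3',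
      Finset.mul_sum, Finset.mul_sum, Finset.mul_sum,
      ← Finset.sum_sub_distrib, ← Finset.sum_sub_distrib, ← Finset.sum_add_distrib]
    refine Finset.sum_congr rfl fun j _ => by ring
  rw [hexpand] at hF2
  rw [hY0, hY1, hY3] at hF2
  have heq : lam * mu ^ 2 * (1 - t) - mu ^ 2 * (lam * (1 - t) - lam * t) - lam * Y2 +
      (lam * Y2 - x v * (lam * (lam * (lam * x v) - x v * d) - x v * (2 * eN)))
      = t * (lam * mu ^ 2 - lam ^ 3 + lam * d + 2 * eN) := by
    rw [htdef]; ring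
  rw [heq] at hF2
  have h2 : 0 ≤ lam * mu ^ 2 - lam ^ 3 + lam * d + 2 * eN :=
    le_of_mul_le_mul_left (by rw [mul_zero]; exact hF2) ht
  have h3 : lam * (lam ^ 2 - mu ^ 2) = lam ^ 3 - lam * mu ^ 2 := by ring
  rw [h3]
  linarith [h2]
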